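/- Let G be a graph on vertex set {1,...,n}. The independence complex Δ(G) is sortable with respect to some labeling of the vertices if and only if G admits a labeling such that for all i < j with {i,j} ∈ E(G), the induced subgraph of G on {i, i+1, ..., j} is a clique (i.e., G is a proper interval graph). -/

import Mathlib

/-- The first component of the sorting `sort(F,G)`: the elements at odd
positions (1-indexed) of the weakly increasing list of the multiset union of `F` and `G`. -/
def sortFst (F G : Finset ℕ) : Finset ℕ :=
  ((((F.val + G.val).sort (· ≤ ·)).zipIdx.filter (fun p => p.2 % 2 = 0)).map Prod.fst).toFinset

/-- The second component of the sorting `sort(F,G)`: the elements at even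
positions (1-indexed). -/
def sortSnd (F G : Finset ℕ) : Finset ℕ :=
  ((((F.val + G.val).sort (· ≤ ·)).zipIdx.filter (fun p => p.2 % 2 = 1)).map Prod.fst).toFinset

def SortableWrt (Δ : Set (Finset ℕ)) : Prop :=
  ∀ F ∈ Δ, ∀ G ∈ Δ, sortFst F G ∈ Δ ∧ sortSnd F G ∈ Δ

def Sortable (Δ : Set (Finset ℕ)) : Prop :=
  ∃ f : ℕ → ℕ, Function.Injective f ∧ SortableWrt {F | ∃ H ∈ Δ, F = H.image f}

def IsIndep (G : SimpleGraph ℕ) (F : Finset ℕ) : Prop :=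
  ∀ a ∈ F, ∀ b ∈ F, ¬ G.Adj a b

def indepComplex (G : SimpleGraph ℕ) (V : Finset ℕ) : Set (Finset ℕ) :=
  {F | F ⊆ V ∧ IsIndep G F}

/-- A labeling `f` of the vertices of `G` exhibits `G` as a proper interval graph:
for every edge `{a,b}` with `f a < f b`, any two vertices whose labels lie in the
interval `[f a, f b]` are adjacent; i.e. the induced subgraph on the label
interval is a clique. -/
def ProperIntervalLabeling (G : SimpleGraph ℕ) (V : Finset ℕ) (f : ℕ → ℕ) : Prop :=
  ∀ a ∈ V, ∀ b ∈ V, G.Adj a b → f a < f b →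
    ∀ c ∈ V, ∀ d ∈ V, f a ≤ f c → f c ≤ f b → f a ≤ f d → f d ≤ f b →
      c ≠ d → G.Adj c d

/- ### Auxiliary lemmas -/

lemma mem_half (l : List ℕ) (r z : ℕ) :
    z ∈ ((l.zipIdx.filter (fun p => p.2 % 2 = r)).map Prod.fst).toFinset ↔
    ∃ i, ∃ _ : i < l.length, i % 2 = r ∧ l[i] = z := by
  simp only [List.mem_toFinset, List.mem_map, List.mem_filter, Prod.exists,
    List.mk_mem_zipIdx_iff_getElem?, decide_eq_true_eq]
  constructor
  · rintro ⟨x, i, ⟨hx, hr⟩, rfl⟩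
    rw [List.getElem?_eq_some_iff] at hx
    exact ⟨i, hx.1, hr, hx.2⟩
  · rintro ⟨i, h, hr, he⟩
    exact ⟨z, i, ⟨by rw [List.getElem?_eq_some_iff]; exact ⟨h, he⟩, hr⟩, rfl⟩

lemma count_eq (S T : Finset ℕ) (z : ℕ) :
    ((S.val + T.val).sort (· ≤ ·)).count z = S.val.count z + T.val.count z := by
  rw [← Multiset.coe_count, Multiset.sort_eq, Multiset.count_add]

lemma count_drop_le (l : List ℕ) (i z : ℕ) : (l.drop i).count z ≤ l.count z := by
  conv_rhs => rw [← l.take_append_drop i]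
  rw [List.count_append]; omega

lemma mono_sorted {l : List ℕ} (hs : l.Pairwise (· ≤ ·)) {i j : ℕ} (hij : i ≤ j)
    (hj : j < l.length) : l[i]'(lt_of_le_of_lt hij hj) ≤ l[j] := by
  rcases eq_or_lt_of_le hij with rfl | h
  · exact le_refl _
  · exact hs.rel_get_of_lt (a := ⟨i, lt_of_le_of_lt hij hj⟩) (b := ⟨j, hj⟩) h

lemma dup_both {S T : Finset ℕ} {z i : ℕ}
    (h2 : i + 1 < ((S.val + T.val).sort (· ≤ ·)).length)
    (e0 : ((S.val + T.val).sort (· ≤ ·))[i]'(by omega) = z)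
    (e1 : ((S.val + T.val).sort (· ≤ ·))[i+1] = z) : z ∈ S ∧ z ∈ T := by
  set l := (S.val + T.val).sort (· ≤ ·) with hl
  have h1 : i < l.length := by omega
  have hdrop : l.drop i = z :: z :: l.drop (i + 2) := by
    rw [List.drop_eq_getElem_cons h1, List.drop_eq_getElem_cons h2, e0, e1]
  have hcnt : 2 ≤ l.count z := by
    have := count_drop_le l i z
    rw [hdrop] at this
    simp [List.count_cons] at this
    omega
  rw [count_eq] at hcnt
  have hS : S.val.count z ≤ 1 := Multiset.nodup_iff_count_le_one.mp S.nodup z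
  have hT : T.val.count z ≤ 1 := Multiset.nodup_iff_count_le_one.mp T.nodup z
  constructor
  · have : 0 < Multiset.count z S.val := by omega
    exact Multiset.count_pos.mp this
  · have : 0 < Multiset.count z T.val := by omega
    exact Multiset.count_pos.mp this

lemma no_trip {S T : Finset ℕ} {z i : ℕ}
    (h3 : i + 2 < ((S.val + T.val).sort (· ≤ ·)).length)
    (e0 : ((S.val + T.val).sort (· ≤ ·))[i]'(by omega) = z)
    (e1 : ((S.val + T.val).sort (· ≤ ·))[i+1]'(by omega) = z)
    (e2 : ((S.val + T.val).sort (· ≤ ·))[i+2] = z) : False := by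
  set l := (S.val + T.val).sort (· ≤ ·) with hl
  have h1 : i < l.length := by omega
  have h2 : i + 1 < l.length := by omega
  have hdrop : l.drop i = z :: z :: z :: l.drop (i + 3) := by
    rw [List.drop_eq_getElem_cons h1, List.drop_eq_getElem_cons h2,
      List.drop_eq_getElem_cons h3, e0, e1, e2]
  have hcnt : 3 ≤ l.count z := by
    have := count_drop_le l i z
    rw [hdrop] at this
    simp [List.count_cons] at this
    omega
  rw [count_eq] at hcnt
  have hS : S.val.count z ≤ 1 := Multiset.nodup_iff_count_le_one.mp S.nodup z
  have hT : T.val.count z ≤ 1 := Multiset.nodup_iff_count_le_one.mp T.nodup z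
  omega

/-- Core contradiction for the backward direction: two adjacent vertices cannot
both have their labels in the same parity class of the sorted union. -/
lemma back_core {G : SimpleGraph ℕ} {V : Finset ℕ} {f : ℕ → ℕ}
    (hinj : Function.Injective f) (hPI : ProperIntervalLabeling G V f)
    {F Gs : Finset ℕ} (hF : F ∈ indepComplex G V) (hGs : Gs ∈ indepComplex G V) (r : ℕ)
    {v1 v2 : ℕ} (hv1V : v1 ∈ V) (hv2V : v2 ∈ V) (hadj : G.Adj v1 v2) (hlt : f v1 < f v2)
    (h1 : f v1 ∈ (((((F.image f).val + (Gs.image f).val).sort (· ≤ ·)).zipIdx.filter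
        (fun p => p.2 % 2 = r)).map Prod.fst).toFinset)
    (h2 : f v2 ∈ (((((F.image f).val + (Gs.image f).val).sort (· ≤ ·)).zipIdx.filter
        (fun p => p.2 % 2 = r)).map Prod.fst).toFinset) : False := by
  set S := F.image f with hSdef
  set T := Gs.image f with hTdef
  set l := (S.val + T.val).sort (· ≤ ·) with hldef
  have hsorted : l.Pairwise (· ≤ ·) := Multiset.pairwise_sort _ _
  rw [mem_half] at h1 h2
  obtain ⟨i, hi, hir, hie⟩ := h1
  obtain ⟨j, hj, hjr, hje⟩ := h2
  have hij : i < j := by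
    by_contra hle
    push_neg at hle
    have := mono_sorted hsorted hle hi
    rw [hie, hje] at this; omega
  have hj2 : i + 2 ≤ j := by omega
  have h3 : i + 2 < l.length := by omega
  have mem_l : ∀ k, ∀ hk : k < l.length, l[k] ∈ S ∨ l[k] ∈ T := by
    intro k hk
    have hm : l[k] ∈ l := List.getElem_mem _
    generalize l[k] = z at hm ⊢
    rw [hldef, Multiset.mem_sort, Multiset.mem_add] at hm
    exact hm
  have bound : ∀ k, i ≤ k → k ≤ j → ∀ hk : k < l.length, f v1 ≤ l[k] ∧ l[k] ≤ f v2 := by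
    intro k hk1 hk2 hk
    constructor
    · rw [← hie]; exact mono_sorted hsorted hk1 hk
    · rw [← hje]; exact mono_sorted hsorted hk2 hj
  have finish : ∀ p q : ℕ, p ≠ q → f v1 ≤ p → p ≤ f v2 → f v1 ≤ q → q ≤ f v2 →
      ((p ∈ S ∧ q ∈ S) ∨ (p ∈ T ∧ q ∈ T)) → False := by
    rintro p q hne hp1 hp2 hq1 hq2 (⟨hp, hq⟩ | ⟨hp, hq⟩)
    · obtain ⟨u1, hu1, rfl⟩ := Finset.mem_image.mp hp
      obtain ⟨u2, hu2, rfl⟩ := Finset.mem_image.mp hq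
      exact hF.2 u1 hu1 u2 hu2 (hPI v1 hv1V v2 hv2V hadj hlt u1 (hF.1 hu1) u2 (hF.1 hu2)
        hp1 hp2 hq1 hq2 (fun h => hne (by rw [h])))
    · obtain ⟨u1, hu1, rfl⟩ := Finset.mem_image.mp hp
      obtain ⟨u2, hu2, rfl⟩ := Finset.mem_image.mp hq
      exact hGs.2 u1 hu1 u2 hu2 (hPI v1 hv1V v2 hv2V hadj hlt u1 (hGs.1 hu1) u2 (hGs.1 hu2)
        hp1 hp2 hq1 hq2 (fun h => hne (by rw [h])))
  -- the three consecutive entries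
  have hi0 : i < l.length := by omega
  have hi1 : i + 1 < l.length := by omega
  set w0 := l[i] with hw0
  set w1 := l[i+1] with hw1
  set w2 := l[i+2] with hw2
  have b0 := bound i le_rfl (by omega) hi0
  have b1 := bound (i+1) (by omega) (by omega) hi1
  have b2 := bound (i+2) (by omega) hj2 h3
  have m0 := mem_l i hi0
  have m1 := mem_l (i+1) hi1
  have m2 := mem_l (i+2) h3
  by_cases h01 : w0 = w1
  · have hboth : w0 ∈ S ∧ w0 ∈ T := dup_both hi1 rfl h01.symm
    have h02 : w0 ≠ w2 := by
      intro h
      exact no_trip h3 rfl h01.symm h.symm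
    rcases m2 with hs | ht
    · exact finish w0 w2 h02 b0.1 b0.2 b2.1 b2.2 (Or.inl ⟨hboth.1, hs⟩)
    · exact finish w0 w2 h02 b0.1 b0.2 b2.1 b2.2 (Or.inr ⟨hboth.2, ht⟩)
  · by_cases h12 : w1 = w2
    · have hboth : w1 ∈ S ∧ w1 ∈ T := dup_both h3 rfl h12.symm
      rcases m0 with hs | ht
      · exact finish w0 w1 h01 b0.1 b0.2 b1.1 b1.2 (Or.inl ⟨hs, hboth.1⟩)
      · exact finish w0 w1 h01 b0.1 b0.2 b1.1 b1.2 (Or.inr ⟨ht, hboth.2⟩)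
    · -- all distinct
      have h02 : w0 ≠ w2 := by
        have hle01 : w0 ≤ w1 := mono_sorted hsorted (by omega) hi1
        have hle12 : w1 ≤ w2 := mono_sorted hsorted (by omega) h3
        intro h; exact h01 (le_antisymm hle01 (h ▸ hle12))
      rcases m0 with s0 | t0 <;> rcases m1 with s1 | t1 <;> rcases m2 with s2 | t2
      · exact finish w0 w1 h01 b0.1 b0.2 b1.1 b1.2 (Or.inl ⟨s0, s1⟩)
      · exact finish w0 w1 h01 b0.1 b0.2 b1.1 b1.2 (Or.inl ⟨s0, s1⟩)
      · exact finish w0 w2 h02 b0.1 b0.2 b2.1 b2.2 (Or.inl ⟨s0, s2⟩)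
      · exact finish w1 w2 h12 b1.1 b1.2 b2.1 b2.2 (Or.inr ⟨t1, t2⟩)
      · exact finish w1 w2 h12 b1.1 b1.2 b2.1 b2.2 (Or.inl ⟨s1, s2⟩)
      · exact finish w0 w2 h02 b0.1 b0.2 b2.1 b2.2 (Or.inr ⟨t0, t2⟩)
      · exact finish w0 w1 h01 b0.1 b0.2 b1.1 b1.2 (Or.inr ⟨t0, t1⟩)
      · exact finish w0 w1 h01 b0.1 b0.2 b1.1 b1.2 (Or.inr ⟨t0, t1⟩)

/-- Backward direction: each half of the sort is the image of an independent set. -/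
lemma half_mem {G : SimpleGraph ℕ} {V : Finset ℕ} {f : ℕ → ℕ}
    (hinj : Function.Injective f) (hPI : ProperIntervalLabeling G V f)
    {F Gs : Finset ℕ} (hF : F ∈ indepComplex G V) (hGs : Gs ∈ indepComplex G V) (r : ℕ) :
    ∃ H ∈ indepComplex G V,
      (((((F.image f).val + (Gs.image f).val).sort (· ≤ ·)).zipIdx.filter
        (fun p => p.2 % 2 = r)).map Prod.fst).toFinset = H.image f := by
  set S := F.image f with hSdef
  set T := Gs.image f with hTdef
  set A := ((((S.val + T.val).sort (· ≤ ·)).zipIdx.filter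
      (fun p => p.2 % 2 = r)).map Prod.fst).toFinset with hAdef
  refine ⟨(F ∪ Gs).filter (fun v => f v ∈ A), ⟨?_, ?_⟩, ?_⟩
  · intro v hv
    rcases Finset.mem_union.mp (Finset.mem_of_mem_filter v hv) with h | h
    · exact hF.1 h
    · exact hGs.1 h
  · intro v1 hv1 v2 hv2 hadj
    have ha1 : f v1 ∈ A := (Finset.mem_filter.mp hv1).2
    have ha2 : f v2 ∈ A := (Finset.mem_filter.mp hv2).2
    have hV1 : v1 ∈ V := by
      rcases Finset.mem_union.mp (Finset.mem_of_mem_filter v1 hv1) with h | h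
      exacts [hF.1 h, hGs.1 h]
    have hV2 : v2 ∈ V := by
      rcases Finset.mem_union.mp (Finset.mem_of_mem_filter v2 hv2) with h | h
      exacts [hF.1 h, hGs.1 h]
    rcases lt_trichotomy (f v1) (f v2) with h | h | h
    · exact back_core hinj hPI hF hGs r hV1 hV2 hadj h ha1 ha2
    · exact (G.ne_of_adj hadj) (hinj h)
    · exact back_core hinj hPI hF hGs r hV2 hV1 hadj.symm h ha2 ha1
  · ext z
    constructor
    · intro hz
      have hzST : z ∈ S ∨ z ∈ T := by
        have hz' := hz
        rw [hAdef, mem_half] at hz'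
        obtain ⟨i, hi, _, he⟩ := hz'
        have hm : z ∈ ((S.val + T.val).sort (· ≤ ·)) := he ▸ List.getElem_mem _
        rw [Multiset.mem_sort, Multiset.mem_add] at hm
        exact hm
      have : ∃ v ∈ F ∪ Gs, f v = z := by
        rcases hzST with h | h
        · obtain ⟨v, hv, hvz⟩ := Finset.mem_image.mp h
          exact ⟨v, Finset.mem_union_left _ hv, hvz⟩
        · obtain ⟨v, hv, hvz⟩ := Finset.mem_image.mp h
          exact ⟨v, Finset.mem_union_right _ hv, hvz⟩
      obtain ⟨v, hv, rfl⟩ := this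
      exact Finset.mem_image.mpr ⟨v, Finset.mem_filter.mpr ⟨hv, hz⟩, rfl⟩
    · intro hz
      obtain ⟨v, hv, rfl⟩ := Finset.mem_image.mp hz
      exact (Finset.mem_filter.mp hv).2

/-- Computation of `sortFst` of a three-element multiset. -/
lemma triple_sort (S T : Finset ℕ) (x u y : ℕ) (hxu : x < u) (huy : u < y)
    (h : S.val + T.val = (x ::ₘ u ::ₘ {y})) : sortFst S T = [x, y].toFinset := by
  have h2 : S.val + T.val = (↑([x, u, y] : List ℕ) : Multiset ℕ) := by
    rw [h]; rfl
  have hl : (S.val + T.val).sort (· ≤ ·) = [x, u, y] := by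
    refine (fun hp h1 h2 => List.Perm.eq_of_pairwise' (r := (· ≤ ·)) h1 h2 hp) ?_ ?_ ?_
    · rw [← Multiset.coe_eq_coe, Multiset.sort_eq, h2]
    · exact Multiset.pairwise_sort _ _
    · simp [List.pairwise_cons]; omega
  unfold sortFst
  rw [hl]
  simp [List.zipIdx, List.filter]

theorem stmt_12 (G : SimpleGraph ℕ) (V : Finset ℕ)
    (hedge : ∀ a b, G.Adj a b → a ∈ V ∧ b ∈ V) :
    Sortable (indepComplex G V) ↔
      ∃ f : ℕ → ℕ, Function.Injective f ∧ ProperIntervalLabeling G V f := by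
  constructor
  · rintro ⟨f, hinj, hsort⟩
    refine ⟨f, hinj, ?_⟩
    have habs : ∀ a b, a ∈ V → b ∈ V → G.Adj a b →
        ([f a, f b].toFinset ∈ {F | ∃ H ∈ indepComplex G V, F = H.image f}) → False := by
      rintro a b ha hb hadj ⟨H, ⟨hHV, hHind⟩, hEq⟩
      have haH : a ∈ H := by
        have : f a ∈ H.image f := by rw [← hEq]; simp
        obtain ⟨v, hv, hfv⟩ := Finset.mem_image.mp this
        rwa [← hinj hfv]
      have hbH : b ∈ H := by
        have : f b ∈ H.image f := by rw [← hEq]; simp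
        obtain ⟨v, hv, hfv⟩ := Finset.mem_image.mp this
        rwa [← hinj hfv]
      exact hHind a haH b hbH hadj
    have mid : ∀ a ∈ V, ∀ b ∈ V, G.Adj a b → ∀ c ∈ V, f a < f c → f c < f b →
        G.Adj a c ∧ G.Adj b c := by
      intro a ha b hb hadj c hc h1 h2
      have hab : a ≠ b := G.ne_of_adj hadj
      constructor
      · by_contra hnac
        have hac : a ≠ c := fun h => (lt_irrefl (f a)) (h ▸ h1)
        have hSmem : ({a, c} : Finset ℕ).image f ∈
            {F | ∃ H ∈ indepComplex G V, F = H.image f} := by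
          refine ⟨{a, c}, ⟨?_, ?_⟩, rfl⟩
          · intro v hv
            rcases Finset.mem_insert.mp hv with rfl | hv
            · exact ha
            · rw [Finset.mem_singleton.mp hv]; exact hc
          · intro p hp q hq hpq
            rcases Finset.mem_insert.mp hp with rfl | hp <;>
              rcases Finset.mem_insert.mp hq with h' | h'
            · rw [h'] at hpq; exact G.irrefl hpq
            · rw [Finset.mem_singleton.mp h'] at hpq; exact hnac hpq
            · rw [Finset.mem_singleton.mp hp, h'] at hpq; exact hnac hpq.symm
            · rw [Finset.mem_singleton.mp hp, Finset.mem_singleton.mp h'] at hpq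
              exact G.irrefl hpq
        have hTmem : ({b} : Finset ℕ).image f ∈
            {F | ∃ H ∈ indepComplex G V, F = H.image f} := by
          refine ⟨{b}, ⟨?_, ?_⟩, rfl⟩
          · intro v hv; rw [Finset.mem_singleton.mp hv]; exact hb
          · intro p hp q hq hpq
            rw [Finset.mem_singleton.mp hp, Finset.mem_singleton.mp hq] at hpq
            exact G.irrefl hpq
        have hmul : (({a, c} : Finset ℕ).image f).val + (({b} : Finset ℕ).image f).val
            = (f a ::ₘ f c ::ₘ {f b}) := by
          have h1' : ({a, c} : Finset ℕ).image f = {f a, f c} := by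
            rw [Finset.image_insert, Finset.image_singleton]
          have h2' : ({f a, f c} : Finset ℕ).val = f a ::ₘ {f c} := by
            apply Finset.insert_val_of_notMem
            simp only [Finset.mem_singleton]
            exact ne_of_lt h1
          rw [h1', h2', Finset.image_singleton, Finset.singleton_val]
          simp [Multiset.cons_add, Multiset.singleton_add]
        have hmem := (hsort _ hSmem _ hTmem).1
        rw [triple_sort _ _ (f a) (f c) (f b) h1 h2 hmul] at hmem
        exact habs a b ha hb hadj hmem
      · by_contra hnbc
        have hbc : b ≠ c := fun h => (lt_irrefl (f b)) (h ▸ h2)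
        have hSmem : ({c, b} : Finset ℕ).image f ∈
            {F | ∃ H ∈ indepComplex G V, F = H.image f} := by
          refine ⟨{c, b}, ⟨?_, ?_⟩, rfl⟩
          · intro v hv
            rcases Finset.mem_insert.mp hv with rfl | hv
            · exact hc
            · rw [Finset.mem_singleton.mp hv]; exact hb
          · intro p hp q hq hpq
            rcases Finset.mem_insert.mp hp with rfl | hp <;>
              rcases Finset.mem_insert.mp hq with h' | h'
            · rw [h'] at hpq; exact G.irrefl hpq
            · rw [Finset.mem_singleton.mp h'] at hpq; exact hnbc hpq.symm
            · rw [Finset.mem_singleton.mp hp, h'] at hpq; exact hnbc hpq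
            · rw [Finset.mem_singleton.mp hp, Finset.mem_singleton.mp h'] at hpq
              exact G.irrefl hpq
        have hTmem : ({a} : Finset ℕ).image f ∈
            {F | ∃ H ∈ indepComplex G V, F = H.image f} := by
          refine ⟨{a}, ⟨?_, ?_⟩, rfl⟩
          · intro v hv; rw [Finset.mem_singleton.mp hv]; exact ha
          · intro p hp q hq hpq
            rw [Finset.mem_singleton.mp hp, Finset.mem_singleton.mp hq] at hpq
            exact G.irrefl hpq
        have hmul : (({c, b} : Finset ℕ).image f).val + (({a} : Finset ℕ).image f).val
            = (f a ::ₘ f c ::ₘ {f b}) := by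
          have h1' : ({c, b} : Finset ℕ).image f = {f c, f b} := by
            rw [Finset.image_insert, Finset.image_singleton]
          have h2' : ({f c, f b} : Finset ℕ).val = f c ::ₘ {f b} := by
            apply Finset.insert_val_of_notMem
            simp only [Finset.mem_singleton]
            exact ne_of_lt h2
          rw [h1', h2', Finset.image_singleton, Finset.singleton_val]
          simp only [Multiset.cons_add, Multiset.singleton_add]
          rw [← Multiset.cons_zero (f a), ← Multiset.cons_zero (f b),
            Multiset.cons_swap (f b) (f a), Multiset.cons_swap (f c) (f a)]
        have hmem := (hsort _ hSmem _ hTmem).1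
        rw [triple_sort _ _ (f a) (f c) (f b) h1 h2 hmul] at hmem
        exact habs a b ha hb hadj hmem
    intro a ha b hb hadj hab c hc d hd hac hcb had hdb hcd
    have main : ∀ c, c ∈ V → ∀ d, d ∈ V → f a ≤ f c → f c < f d → f d ≤ f b →
        G.Adj c d := by
      intro c hc d hd h1 h2 h3
      rcases eq_or_lt_of_le h1 with he1 | hl1 <;> rcases eq_or_lt_of_le h3 with he3 | hl3
      · have e1 : a = c := hinj he1
        have e2 : d = b := hinj he3
        rw [← e1, e2]; exact hadj
      · have e1 : a = c := hinj he1
        rw [← e1] at h2 ⊢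
        exact (mid a ha b hb hadj d hd h2 hl3).1
      · have e2 : d = b := hinj he3
        rw [e2] at h2 ⊢
        exact ((mid a ha b hb hadj c hc hl1 h2).2).symm
      · have hAd : G.Adj a d := (mid a ha b hb hadj d hd (lt_trans hl1 h2) hl3).1
        exact ((mid a ha d hd hAd c hc hl1 h2).2).symm
    rcases lt_trichotomy (f c) (f d) with h | h | h
    · exact main c hc d hd hac h hdb
    · exact absurd (hinj h) hcd
    · exact (main d hd c hc had h hcb).symm
  · rintro ⟨f, hinj, hPI⟩
    refine ⟨f, hinj, ?_⟩
    intro S hS T hT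
    obtain ⟨F, hF, rfl⟩ := hS
    obtain ⟨Gs, hGs, rfl⟩ := hT
    constructor
    · obtain ⟨H, hH, hEq⟩ := half_mem hinj hPI hF hGs 0
      exact ⟨H, hH, hEq⟩
    · obtain ⟨H, hH, hEq⟩ := half_mem hinj hPI hF hGs 1
      exact ⟨H, hH, hEq⟩
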